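/- For any convex function L : ℝⁿ → ℝ, there exists a Borel measurable map y : ℝⁿ → ℝⁿ such that y(x) ∈ ∂L(x) for every x ∈ ℝⁿ. -/

import Mathlib

open Metric Filter Topology Set

/-- The subdifferential of `L` at `x`. -/
def subdiff {n : ℕ} (L : EuclideanSpace ℝ (Fin n) → ℝ) (x : EuclideanSpace ℝ (Fin n)) :
    Set (EuclideanSpace ℝ (Fin n)) :=
  {y | ∀ z, L x + (inner ℝ y (z - x) : ℝ) ≤ L z}

variable {n : ℕ} (L : EuclideanSpace ℝ (Fin n) → ℝ)

lemma subdiff_isClosed (x : EuclideanSpace ℝ (Fin n)) : IsClosed (subdiff L x) := by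
  have : subdiff L x = ⋂ z, {y : EuclideanSpace ℝ (Fin n) | L x + (inner ℝ y (z - x) : ℝ) ≤ L z} := by
    ext y; simp [subdiff]
  rw [this]
  exact isClosed_iInter fun z => isClosed_le (continuous_const.add (continuous_id.inner continuous_const)) continuous_const

lemma subdiff_nonempty (hL : ConvexOn ℝ Set.univ L) (x : EuclideanSpace ℝ (Fin n)) :
    (subdiff L x).Nonempty := by
  have hc : Continuous L := by
    rw [← continuousOn_univ]
    exact hL.continuousOn isOpen_univ
  set S : Set ((EuclideanSpace ℝ (Fin n)) × ℝ) := {p | L p.1 < p.2} with hS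
  have hSconv : Convex ℝ S := by
    intro p hp q hq a b ha hb hab
    simp only [Set.mem_setOf_eq, hS, Prod.fst_add, Prod.smul_fst, Prod.snd_add,
      Prod.smul_snd, smul_eq_mul] at *
    rcases eq_or_lt_of_le ha with h | h
    · have hb1 : b = 1 := by linarith
      subst hb1; rw [← h]; simpa using hq
    · calc L (a • p.1 + b • q.1) ≤ a * L p.1 + b * L q.1 :=
            hL.2 (Set.mem_univ _) (Set.mem_univ _) ha hb hab
      _ < a * p.2 + b * q.2 := by
          have h1 : a * L p.1 < a * p.2 := by exact (mul_lt_mul_iff_right₀ h).2 hp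
          have h2 : b * L q.1 ≤ b * q.2 := mul_le_mul_of_nonneg_left hq.le hb
          linarith
  have hSopen : IsOpen S := isOpen_lt (hc.comp continuous_fst) continuous_snd
  have hxS : (x, L x) ∉ S := by simp [hS]
  obtain ⟨f, hf⟩ := geometric_hahn_banach_open_point hSconv hSopen hxS
  set c : ℝ := f (0, 1) with hcdef
  have key : ∀ (z : EuclideanSpace ℝ (Fin n)) (t : ℝ), L z < t →
      f (z, 0) + t * c < f (x, 0) + L x * c := by
    intro z t ht
    have hmem : ((z : EuclideanSpace ℝ (Fin n)), t) ∈ S := ht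
    have := hf _ hmem
    have e1 : ∀ (w : EuclideanSpace ℝ (Fin n)) (s : ℝ), f (w, s) = f (w, 0) + s * c := by
      intro w s
      have : ((w : EuclideanSpace ℝ (Fin n)), s) = (w, 0) + s • ((0 : EuclideanSpace ℝ (Fin n)), (1:ℝ)) := by
        simp [Prod.ext_iff]
      rw [this, map_add, map_smul, smul_eq_mul, hcdef]
    rw [e1 z t, e1 x (L x)] at this
    exact this
  have hcneg : c < 0 := by
    have := key x (L x + 1) (by linarith)
    linarith
  have hkey2 : ∀ z, f (z, 0) + L z * c ≤ f (x, 0) + L x * c := by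
    intro z
    by_contra hlt
    push_neg at hlt
    set A := f (z, 0) + L z * c with hA
    set B := f (x, 0) + L x * c with hB
    set ε : ℝ := (A - B) / (-c) with hε
    have hεpos : 0 < ε := div_pos (by linarith) (by linarith)
    have hcne : c ≠ 0 := by linarith
    have hm1 : (-c)⁻¹ * c = -1 := by
      rw [inv_mul_eq_div, div_neg, div_self hcne]
    have hεc : ε * c = -(A - B) := by
      rw [hε, div_eq_mul_inv]
      linear_combination (A - B) * hm1
    have hk := key z (L z + ε) (by linarith : L z < L z + ε)
    have he : f (z, 0) + (L z + ε) * c = A + ε * c := by rw [hA]; ring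
    rw [he, hεc] at hk
    linarith
  refine ⟨(-c)⁻¹ • (InnerProductSpace.toDual ℝ _).symm (f.comp (ContinuousLinearMap.inl ℝ _ ℝ)), ?_⟩
  intro z
  have hin : (inner ℝ ((-c)⁻¹ • (InnerProductSpace.toDual ℝ _).symm (f.comp (ContinuousLinearMap.inl ℝ _ ℝ))) (z - x) : ℝ)
      = (-c)⁻¹ * (f (z - x, 0)) := by
    rw [real_inner_smul_left, InnerProductSpace.toDual_symm_apply]
    rfl
  rw [hin]
  have hsub : f ((z - x : EuclideanSpace ℝ (Fin n)), (0:ℝ)) = f (z, 0) - f (x, 0) := by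
    have : ((z - x : EuclideanSpace ℝ (Fin n)), (0:ℝ)) = (z, 0) - (x, 0) := by simp [Prod.ext_iff]
    rw [this, map_sub]
  rw [hsub]
  have h2 := hkey2 z
  have hcinvpos : 0 < (-c)⁻¹ := inv_pos.2 (by linarith)
  -- f(z,0) - f(x,0) ≤ (L x - L z) * c
  have h3 : f (z, 0) - f (x, 0) ≤ (L x - L z) * c := by linarith
  have h4 : (-c)⁻¹ * (f (z, 0) - f (x, 0)) ≤ (-c)⁻¹ * ((L x - L z) * c) :=
    mul_le_mul_of_nonneg_left h3 hcinvpos.le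
  have hcne : c ≠ 0 := by linarith
  have hm1 : (-c)⁻¹ * c = -1 := by
    rw [inv_mul_eq_div, div_neg, div_self hcne]
  have h5 : (-c)⁻¹ * ((L x - L z) * c) = L z - L x := by
    linear_combination (L x - L z) * hm1
  linarith

lemma subdiff_inter_closed (hc : Continuous L) (K : Set (EuclideanSpace ℝ (Fin n)))
    (hK : IsCompact K) : IsClosed {x | (subdiff L x ∩ K).Nonempty} := by
  refine IsSeqClosed.isClosed ?_
  intro u x hu hux
  choose y hy1 hy2 using hu
  obtain ⟨w, hwK, φ, hφ, hconv⟩ := hK.tendsto_subseq hy2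
  refine ⟨w, ?_, hwK⟩
  intro z
  have huφ : Tendsto (u ∘ φ) atTop (𝓝 x) := hux.comp hφ.tendsto_atTop
  have hL1 : Tendsto (fun k => L (u (φ k))) atTop (𝓝 (L x)) :=
    (hc.tendsto x).comp huφ
  have hL2 : Tendsto (fun k => (inner ℝ (y (φ k)) (z - u (φ k)) : ℝ)) atTop
      (𝓝 (inner ℝ w (z - x) : ℝ)) :=
    hconv.inner (tendsto_const_nhds.sub huφ)
  have hle : ∀ k, L (u (φ k)) + (inner ℝ (y (φ k)) (z - u (φ k)) : ℝ) ≤ L z :=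
    fun k => hy1 (φ k) z
  exact le_of_tendsto (hL1.add hL2) (Filter.Eventually.of_forall hle)

section Construction

variable (d : ℕ → EuclideanSpace ℝ (Fin n))

lemma exH0 (hne : ∀ x, (subdiff L x).Nonempty) (hd : DenseRange d)
    (x : EuclideanSpace ℝ (Fin n)) :
    ∃ i, (subdiff L x ∩ closedBall (d i) ((1/2 : ℝ)^(0:ℕ))).Nonempty := by
  obtain ⟨y, hy⟩ := hne x
  obtain ⟨i, hi⟩ := hd.exists_dist_lt y (by norm_num : (0:ℝ) < 1)
  exact ⟨i, y, hy, by simpa using hi.le⟩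

lemma exHS (hd : DenseRange d) (x : EuclideanSpace ℝ (Fin n)) (k j : ℕ)
    (h : (subdiff L x ∩ closedBall (d j) ((1/2 : ℝ)^k)).Nonempty) :
    ∃ i, (subdiff L x ∩ closedBall (d j) ((1/2 : ℝ)^k)
        ∩ closedBall (d i) ((1/2 : ℝ)^(k+1))).Nonempty := by
  obtain ⟨y, hy⟩ := h
  obtain ⟨i, hi⟩ := hd.exists_dist_lt y (by positivity : (0:ℝ) < (1/2 : ℝ)^(k+1))
  exact ⟨i, y, hy, hi.le⟩

open scoped Classical in
noncomputable def seqH (hne : ∀ x, (subdiff L x).Nonempty) (hd : DenseRange d)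
    (x : EuclideanSpace ℝ (Fin n)) :
    (k : ℕ) → {j : ℕ // (subdiff L x ∩ closedBall (d j) ((1/2 : ℝ)^k)).Nonempty}
  | 0 => ⟨Nat.find (exH0 L d hne hd x), Nat.find_spec (exH0 L d hne hd x)⟩
  | (k+1) =>
    let p := seqH hne hd x k
    ⟨Nat.find (exHS L d hd x k p.1 p.2),
      (Nat.find_spec (exHS L d hd x k p.1 p.2)).mono (fun y hy => ⟨hy.1.1, hy.2⟩)⟩

variable (hne : ∀ x, (subdiff L x).Nonempty) (hd : DenseRange d)

lemma dist_seqH (x : EuclideanSpace ℝ (Fin n)) (k : ℕ) :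
    dist (d (seqH L d hne hd x k).1) (d (seqH L d hne hd x (k+1)).1) ≤ 2 * (1/2 : ℝ)^k := by
  classical
  obtain ⟨y, hy⟩ := Nat.find_spec (exHS L d hd x k (seqH L d hne hd x k).1 (seqH L d hne hd x k).2)
  have h1 : dist y (d (seqH L d hne hd x k).1) ≤ (1/2 : ℝ)^k := hy.1.2
  have h2 : dist y (d (seqH L d hne hd x (k+1)).1) ≤ (1/2 : ℝ)^(k+1) := hy.2
  have h3 := dist_triangle (d (seqH L d hne hd x k).1) y (d (seqH L d hne hd x (k+1)).1)
  have h4 : ((1/2 : ℝ))^(k+1) ≤ (1/2 : ℝ)^k := by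
    apply pow_le_pow_of_le_one <;> norm_num
  rw [dist_comm] at h1
  linarith

lemma cauchy_seqH (x : EuclideanSpace ℝ (Fin n)) :
    CauchySeq (fun k => d (seqH L d hne hd x k).1) :=
  cauchySeq_of_le_geometric (1/2) 2 (by norm_num) (dist_seqH L d hne hd x)

noncomputable def ylim (x : EuclideanSpace ℝ (Fin n)) : EuclideanSpace ℝ (Fin n) :=
  limUnder atTop (fun k => d (seqH L d hne hd x k).1)

lemma tendsto_ylim (x : EuclideanSpace ℝ (Fin n)) :
    Tendsto (fun k => d (seqH L d hne hd x k).1) atTop (𝓝 (ylim L d hne hd x)) :=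
  (cauchy_seqH L d hne hd x).tendsto_limUnder

lemma ylim_mem (x : EuclideanSpace ℝ (Fin n)) : ylim L d hne hd x ∈ subdiff L x := by
  have hv : ∀ k, ∃ v, v ∈ subdiff L x ∧ dist v (d (seqH L d hne hd x k).1) ≤ (1/2 : ℝ)^k :=
    fun k => (seqH L d hne hd x k).2.imp (fun v hv => ⟨hv.1, hv.2⟩)
  choose v hv1 hv2 using hv
  have h0 : Tendsto (fun k => dist (v k) (ylim L d hne hd x)) atTop (𝓝 0) := by
    have hb : ∀ k, dist (v k) (ylim L d hne hd x)
        ≤ (1/2 : ℝ)^k + dist (d (seqH L d hne hd x k).1) (ylim L d hne hd x) := by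
      intro k
      calc dist (v k) (ylim L d hne hd x)
          ≤ dist (v k) (d (seqH L d hne hd x k).1)
            + dist (d (seqH L d hne hd x k).1) (ylim L d hne hd x) := dist_triangle _ _ _
        _ ≤ (1/2 : ℝ)^k + dist (d (seqH L d hne hd x k).1) (ylim L d hne hd x) := by
            have := hv2 k; linarith
    have hlim : Tendsto (fun k => (1/2 : ℝ)^k
        + dist (d (seqH L d hne hd x k).1) (ylim L d hne hd x)) atTop (𝓝 0) := by
      have t1 : Tendsto (fun k : ℕ => (1/2 : ℝ)^k) atTop (𝓝 0) :=
        tendsto_pow_atTop_nhds_zero_of_lt_one (by norm_num) (by norm_num)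
      have t2 : Tendsto (fun k => dist (d (seqH L d hne hd x k).1) (ylim L d hne hd x))
          atTop (𝓝 0) :=
        tendsto_iff_dist_tendsto_zero.1 (tendsto_ylim L d hne hd x)
      simpa using t1.add t2
    exact squeeze_zero (fun k => dist_nonneg) hb hlim
  have hvt : Tendsto v atTop (𝓝 (ylim L d hne hd x)) := tendsto_iff_dist_tendsto_zero.2 h0
  exact (subdiff_isClosed L x).mem_of_tendsto hvt (Filter.Eventually.of_forall hv1)

lemma meas_seqH (hc : Continuous L) (k : ℕ) :
    Measurable fun x => ((seqH L d hne hd x k).1 : ℕ) := by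
  classical
  induction k with
  | zero =>
    apply measurable_to_countable'
    intro i
    have hpre : (fun x => ((seqH L d hne hd x 0).1 : ℕ)) ⁻¹' {i}
        = {x | (subdiff L x ∩ closedBall (d i) ((1/2:ℝ)^(0:ℕ))).Nonempty}
          ∩ ⋂ m ∈ Set.Iio i, {x | (subdiff L x ∩ closedBall (d m) ((1/2:ℝ)^(0:ℕ))).Nonempty}ᶜ := by
      ext x
      simp only [Set.mem_preimage, Set.mem_singleton_iff, seqH, Nat.find_eq_iff,
        Set.mem_inter_iff, Set.mem_setOf_eq, Set.mem_iInter, Set.mem_compl_iff, Set.mem_Iio]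
    rw [hpre]
    refine MeasurableSet.inter ?_ ?_
    · exact (subdiff_inter_closed L hc _ (isCompact_closedBall _ _)).measurableSet
    · exact MeasurableSet.biInter (Set.to_countable _) fun m _ =>
        (subdiff_inter_closed L hc _ (isCompact_closedBall _ _)).measurableSet.compl
  | succ k ih =>
    apply measurable_to_countable'
    intro i
    set S2 : ℕ → ℕ → Set (EuclideanSpace ℝ (Fin n)) := fun j m =>
      {x | (subdiff L x ∩ closedBall (d j) ((1/2:ℝ)^k)
          ∩ closedBall (d m) ((1/2:ℝ)^(k+1))).Nonempty} with hS2
    have hS2meas : ∀ j m, MeasurableSet (S2 j m) := by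
      intro j m
      have : S2 j m = {x | (subdiff L x ∩ (closedBall (d j) ((1/2:ℝ)^k)
          ∩ closedBall (d m) ((1/2:ℝ)^(k+1)))).Nonempty} := by
        simp [hS2, Set.inter_assoc]
      rw [this]
      exact (subdiff_inter_closed L hc _
        ((isCompact_closedBall _ _).inter_right Metric.isClosed_closedBall)).measurableSet
    have hpre : (fun x => ((seqH L d hne hd x (k+1)).1 : ℕ)) ⁻¹' {i}
        = ⋃ j, ((fun x => ((seqH L d hne hd x k).1 : ℕ)) ⁻¹' {j})
            ∩ (S2 j i ∩ ⋂ m ∈ Set.Iio i, (S2 j m)ᶜ) := by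
      ext x
      constructor
      · intro hx
        have hx' : Nat.find (exHS L d hd x k (seqH L d hne hd x k).1
            (seqH L d hne hd x k).2) = i := hx
        have hfi := (Nat.find_eq_iff _).1 hx'
        refine Set.mem_iUnion.2 ⟨(seqH L d hne hd x k).1, rfl, hfi.1, ?_⟩
        exact Set.mem_biInter fun m hm => hfi.2 m hm
      · intro hx
        obtain ⟨j, hj1, hj2, hj3⟩ := Set.mem_iUnion.1 hx
        have hj1' : ((seqH L d hne hd x k).1 : ℕ) = j := hj1
        show Nat.find (exHS L d hd x k (seqH L d hne hd x k).1
            (seqH L d hne hd x k).2) = i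
        rw [Nat.find_eq_iff]
        refine ⟨?_, fun m hm hmem => ?_⟩
        · rw [hS2] at hj2
          simp only [Set.mem_setOf_eq] at hj2
          rwa [hj1']
        · have := Set.mem_iInter₂.1 hj3 m hm
          rw [hS2] at this
          simp only [Set.mem_compl_iff, Set.mem_setOf_eq, hj1'] at hmem
          exact this hmem
    rw [hpre]
    refine MeasurableSet.iUnion fun j => MeasurableSet.inter (ih (measurableSet_singleton j)) ?_
    exact (hS2meas j i).inter
      (MeasurableSet.biInter (Set.to_countable _) fun m _ => (hS2meas j m).compl)

lemma meas_ylim (hc : Continuous L) : Measurable (ylim L d hne hd) := by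
  apply measurable_of_tendsto_metrizable
    (f := fun k x => d (seqH L d hne hd x k).1)
    (fun k => measurable_from_top.comp (meas_seqH L d hne hd hc k))
  exact tendsto_pi_nhds.2 fun x => tendsto_ylim L d hne hd x

end Construction

theorem stmt3 {n : ℕ} (L : EuclideanSpace ℝ (Fin n) → ℝ) (hL : ConvexOn ℝ Set.univ L) :
    ∃ y : EuclideanSpace ℝ (Fin n) → EuclideanSpace ℝ (Fin n),
      Measurable y ∧ ∀ x, y x ∈ subdiff L x := by
  have hc : Continuous L := by
    rw [← continuousOn_univ]
    exact hL.continuousOn isOpen_univ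
  obtain ⟨d, hd⟩ := TopologicalSpace.exists_dense_seq (EuclideanSpace ℝ (Fin n))
  exact ⟨ylim L d (subdiff_nonempty L hL) hd,
    meas_ylim L d (subdiff_nonempty L hL) hd hc,
    ylim_mem L d (subdiff_nonempty L hL) hd⟩
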